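/- The square spiral trajectory S : ℕ → ℤ×ℤ (defined by S(0) = (0,0) and consecutive loops of 2p−1 steps North, 2p−1 steps West, 2p steps South, 2p steps East for p = 1, 2, ...) is surjective: every node of ℤ×ℤ is visited by the spiral at some round; i.e., for every v ∈ ℤ×ℤ there exists t ∈ ℕ with S(t) = v. -/

import Mathlib

/-- Direction of global step `t` of the square spiral, where `p` means the agent
is currently in loop number `p+1` (loop `p+1` consists of `2p+1` steps North,
`2p+1` steps West, `2p+2` steps South, `2p+2` steps East, total `8p+6` steps). -/
def spiralDir (t p : ℕ) : ℤ × ℤ :=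
  if h : t < 8 * p + 6 then
    if t < 2 * p + 1 then (0, 1)
    else if t < 4 * p + 2 then (-1, 0)
    else if t < 6 * p + 4 then (0, -1)
    else (1, 0)
  else spiralDir (t - (8 * p + 6)) (p + 1)
termination_by t
decreasing_by omega

/-- The square spiral trajectory starting at the origin: position after `t` steps. -/
def spiral (t : ℕ) : ℤ × ℤ := ∑ i ∈ Finset.range t, spiralDir i 0

lemma spiralDir_shift (p : ℕ) :
    ∀ q s : ℕ, spiralDir (4*p^2 + 2*p + 8*p*q + s) q = spiralDir s (p + q) := by
  induction p with
  | zero => intro q s; norm_num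
  | succ p ih =>
    intro q s
    rw [spiralDir, dif_neg (by nlinarith)]
    have h : 4*(p+1)^2 + 2*(p+1) + 8*(p+1)*q + s - (8*q+6) = 4*p^2 + 2*p + 8*p*(q+1) + s := by
      ring_nf; omega
    rw [h, ih (q+1)]
    congr 1
    omega

/-- Claimed position after `s` steps of loop `p+1`, starting at `(p,-p)`. -/
def f (p s : ℕ) : ℤ × ℤ :=
  if s ≤ 2*p+1 then ((p:ℤ), -(p:ℤ) + s)
  else if s ≤ 4*p+2 then ((p:ℤ) + (2*p+1) - s, (p:ℤ) + 1)
  else if s ≤ 6*p+4 then (-(p:ℤ) - 1, (p:ℤ) + 1 + (4*p+2) - s)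
  else (-(p:ℤ) - 1 + s - (6*p+4), -(p:ℤ) - 1)

lemma spiral_succ (n : ℕ) : spiral (n+1) = spiral n + spiralDir n 0 := by
  simp [spiral, Finset.sum_range_succ]

lemma spiral_loop (p : ℕ) (h0 : spiral (4*p^2+2*p) = ((p:ℤ), -(p:ℤ))) :
    ∀ s, s ≤ 8*p+6 → spiral (4*p^2+2*p+s) = f p s := by
  intro s
  induction s with
  | zero => intro _; simpa [f] using h0
  | succ s ih =>
    intro hs
    have hs' : s < 8*p+6 := by omega
    have e1 : 4*p^2+2*p+(s+1) = (4*p^2+2*p+s) + 1 := by omega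
    rw [e1, spiral_succ, ih (by omega)]
    have e2 : spiralDir (4*p^2+2*p+s) 0 = spiralDir s p := by
      have := spiralDir_shift p 0 s
      simpa using this
    rw [e2, spiralDir, dif_pos hs']
    simp only [f]
    split_ifs <;>
      (simp only [Prod.mk_add_mk, Prod.mk.injEq]; constructor <;> push_cast <;> omega)

lemma spiral_start : ∀ p : ℕ, spiral (4*p^2+2*p) = ((p:ℤ), -(p:ℤ)) := by
  intro p
  induction p with
  | zero => simp [spiral]; rfl
  | succ p ih =>
    have e : 4*(p+1)^2+2*(p+1) = 4*p^2+2*p + (8*p+6) := by ring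
    rw [e, spiral_loop p ih (8*p+6) le_rfl]
    simp only [f]
    split_ifs <;> simp only [Prod.mk.injEq] <;> constructor <;> push_cast <;> omega

lemma spiral_key (p s : ℕ) (hs : s ≤ 8*p+6) : spiral (4*p^2+2*p+s) = f p s :=
  spiral_loop p (spiral_start p) s hs

/-- The square spiral visits every node of the grid: it is surjective. -/
theorem spiral_surjective : Function.Surjective spiral := by
  rintro ⟨x, y⟩
  by_cases h1 : 0 ≤ x ∧ -x ≤ y ∧ y ≤ x + 1
  · refine ⟨4*x.toNat^2+2*x.toNat + (y+x).toNat, ?_⟩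
    rw [spiral_key x.toNat ((y+x).toNat) (by omega)]
    simp only [f]
    split_ifs <;> simp only [Prod.mk.injEq] <;> constructor <;> push_cast <;> omega
  · by_cases h2 : 1 ≤ y ∧ -y ≤ x ∧ x ≤ y - 1
    · refine ⟨4*(y-1).toNat^2+2*(y-1).toNat + (2*(y-1).toNat+1 + ((y-1)-x).toNat), ?_⟩
      rw [spiral_key (y-1).toNat _ (by omega)]
      simp only [f]
      split_ifs <;> simp only [Prod.mk.injEq] <;> constructor <;> push_cast <;> omega
    · by_cases h3 : x ≤ -1 ∧ x ≤ y ∧ y ≤ -x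
      · refine ⟨4*(-x-1).toNat^2+2*(-x-1).toNat + (4*(-x-1).toNat+2 + ((-x)-y).toNat), ?_⟩
        rw [spiral_key (-x-1).toNat _ (by omega)]
        simp only [f]
        split_ifs <;> simp only [Prod.mk.injEq] <;> constructor <;> push_cast <;> omega
      · have h4 : y ≤ -1 ∧ y ≤ x ∧ x ≤ -y := by omega
        refine ⟨4*(-y-1).toNat^2+2*(-y-1).toNat + (6*(-y-1).toNat+4 + (x-y).toNat), ?_⟩
        rw [spiral_key (-y-1).toNat _ (by omega)]
        simp only [f]
        split_ifs <;> simp only [Prod.mk.injEq] <;> constructor <;> push_cast <;> omega
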